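/- arXiv:1310.6266 — 12 statements merged into one kernel-verified Lean document; each statement's English description precedes it below -/
import Mathlib

section
/- Let A and B be non-empty finite sets of non-negative integers. Then |A + B| = |A| · |B| if and only if the difference sets D_A and D_B are disjoint, where D_A = {a - a' : a, a' ∈ A, a > a'} is the set of positive differences between elements of A (and similarly for D_B). -/
open Pointwise

/-- The difference set of a finite set `A` of non-negative integers:
the set of positive differences `a - a'` with `a, a' ∈ A`, `a > a'`. -/
def diffSet (A : Finset ℕ) : Finset ℕ :=
  ((A ×ˢ A).filter fun p => p.2 < p.1).image fun p => p.1 - p.2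

/-- `f` is an integer additive set-indexer (IASI) of the simple graph `G`:
`f` is injective, assigns nonempty finite sets of non-negative integers to vertices,
and the induced edge function `f⁺(uv) = f(u) + f(v)` is injective on edges. -/
def IsIASI {V : Type*} (G : SimpleGraph V) (f : V → Finset ℕ) : Prop :=
  Function.Injective f ∧ (∀ v, (f v).Nonempty) ∧
    ∀ ⦃u v u' v' : V⦄, G.Adj u v → G.Adj u' v' →
      f u + f v = f u' + f v' → s(u, v) = s(u', v')

/-- A strong IASI: `|f⁺(uv)| = |f(u)| * |f(v)|` for all edges `uv`. -/
def IsStrongIASI {V : Type*} (G : SimpleGraph V) (f : V → Finset ℕ) : Prop :=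
  IsIASI G f ∧ ∀ ⦃u v : V⦄, G.Adj u v → (f u + f v).card = (f u).card * (f v).card

/-- A strongly `k`-uniform IASI: `|f⁺(uv)| = |f(u)| * |f(v)| = k` for all edges `uv`. -/
def IsStronglyUniformIASI {V : Type*} (G : SimpleGraph V) (f : V → Finset ℕ) (k : ℕ) : Prop :=
  IsStrongIASI G f ∧ ∀ ⦃u v : V⦄, G.Adj u v → (f u + f v).card = k

/-- A weakly `k`-uniform IASI: `|f⁺(uv)| = max(|f(u)|, |f(v)|) = k` for all edges `uv`. -/
def IsWeaklyUniformIASI {V : Type*} (G : SimpleGraph V) (f : V → Finset ℕ) (k : ℕ) : Prop :=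
  IsIASI G f ∧ ∀ ⦃u v : V⦄, G.Adj u v →
    (f u + f v).card = max (f u).card (f v).card ∧ (f u + f v).card = k
/-- For nonempty finite sets `A, B ⊆ ℕ`, `|A + B| = |A| * |B|` iff the
difference sets `D_A` and `D_B` are disjoint. -/
theorem sumset_card_eq_mul_iff_disjoint_diffSet (A B : Finset ℕ)
    (hA : A.Nonempty) (hB : B.Nonempty) :
    (A + B).card = A.card * B.card ↔ Disjoint (diffSet A) (diffSet B) := by
  have himg : A + B = (A ×ˢ B).image fun p => p.1 + p.2 := by
    ext x
    simp only [Finset.mem_add, Finset.mem_image, Finset.mem_product, Prod.exists]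
    constructor
    · rintro ⟨a, ha, b, hb, rfl⟩; exact ⟨a, b, ⟨ha, hb⟩, rfl⟩
    · rintro ⟨a, b, ⟨ha, hb⟩, rfl⟩; exact ⟨a, ha, b, hb, rfl⟩
  rw [himg, show A.card * B.card = (A ×ˢ B).card from (Finset.card_product A B).symm,
    Finset.card_image_iff]
  constructor
  · intro hinj
    rw [Finset.disjoint_left]
    intro d hdA hdB
    simp only [diffSet, Finset.mem_image, Finset.mem_filter, Finset.mem_product,
      Prod.exists] at hdA hdB
    obtain ⟨a, a', ⟨⟨haA, ha'A⟩, hlt⟩, hda⟩ := hdA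
    obtain ⟨b, b', ⟨⟨hbB, hb'B⟩, hlt'⟩, hdb⟩ := hdB
    have heq : (fun p : ℕ × ℕ => p.1 + p.2) (a', b) = (fun p : ℕ × ℕ => p.1 + p.2) (a, b') := by
      simp only; omega
    have h1 : ((a', b) : ℕ × ℕ) ∈ (↑(A ×ˢ B) : Set (ℕ × ℕ)) := by
      simp [Finset.mem_product, ha'A, hbB]
    have h2 : ((a, b') : ℕ × ℕ) ∈ (↑(A ×ˢ B) : Set (ℕ × ℕ)) := by
      simp [Finset.mem_product, haA, hb'B]
    have := hinj h1 h2 heq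
    simp only [Prod.mk.injEq] at this
    omega
  · intro hd p hp q hq heq
    simp only [Finset.coe_product, Set.mem_prod, Finset.mem_coe] at hp hq
    obtain ⟨hp1, hp2⟩ := hp
    obtain ⟨hq1, hq2⟩ := hq
    simp only at heq
    have key : ∀ x y : ℕ, x ∈ A → y ∈ A → ∀ u v : ℕ, u ∈ B → v ∈ B →
        x < y → x + u = y + v → False := by
      intro x y hx hy u v hu hv hxy hsum
      have hmA : y - x ∈ diffSet A := by
        simp only [diffSet, Finset.mem_image, Finset.mem_filter, Finset.mem_product,
          Prod.exists]
        exact ⟨y, x, ⟨⟨hy, hx⟩, hxy⟩, rfl⟩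
      have hmB : y - x ∈ diffSet B := by
        simp only [diffSet, Finset.mem_image, Finset.mem_filter, Finset.mem_product,
          Prod.exists]
        exact ⟨u, v, ⟨⟨hu, hv⟩, by omega⟩, by omega⟩
      exact (Finset.disjoint_left.mp hd hmA) hmB
    rcases lt_trichotomy p.1 q.1 with h | h | h
    · exact absurd heq (fun hs => key p.1 q.1 hp1 hq1 p.2 q.2 hp2 hq2 h hs)
    · have : p.2 = q.2 := by omega
      exact Prod.ext h this
    · exact absurd heq.symm (fun hs => key q.1 p.1 hq1 hp1 q.2 p.2 hq2 hp2 h hs)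
end

section
/- Let n be a positive integer and let f assign to each vertex v_i of the complete graph K_n a non-empty finite set A_i of non-negative integers, with the A_i pairwise distinct. Then |A_i + A_j| = |A_i| · |A_j| holds for every pair of distinct indices i, j (i.e., f satisfies the strong condition on every edge of K_n) if and only if the difference sets D_1, D_2, ..., D_n are pairwise disjoint, where D_i is the set of positive differences between elements of A_i. -/
open Pointwise

lemma mem_diffSet {A : Finset ℕ} {d : ℕ} :
    d ∈ diffSet A ↔ ∃ a ∈ A, ∃ a' ∈ A, a' < a ∧ a - a' = d := by
  simp only [diffSet, Finset.mem_image, Finset.mem_filter, Finset.mem_product]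
  constructor
  · rintro ⟨⟨a, a'⟩, ⟨⟨ha, ha'⟩, hlt⟩, rfl⟩
    exact ⟨a, ha, a', ha', hlt, rfl⟩
  · rintro ⟨a, ha, a', ha', hlt, rfl⟩
    exact ⟨⟨a, a'⟩, ⟨⟨ha, ha'⟩, hlt⟩, rfl⟩

lemma strong_iff_disjoint (A B : Finset ℕ) :
    (A + B).card = A.card * B.card ↔ Disjoint (diffSet A) (diffSet B) := by
  have himg : A + B = (A ×ˢ B).image fun p => p.1 + p.2 := by
    ext x
    simp [Finset.mem_add, Finset.mem_image, Finset.mem_product]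
    aesop
  have hcard : (A ×ˢ B).card = A.card * B.card := Finset.card_product A B
  rw [himg, ← hcard, Finset.card_image_iff]
  constructor
  · intro hInj
    rw [Finset.disjoint_left]
    intro d hdA hdB
    obtain ⟨a, ha, a', ha', hlt, hda⟩ := mem_diffSet.mp hdA
    obtain ⟨b, hb, b', hb', hlt', hdb⟩ := mem_diffSet.mp hdB
    have : a' + b = a + b' := by omega
    have := hInj (by simp [Finset.mem_product, ha', hb] : ((a', b) : ℕ × ℕ) ∈ (A ×ˢ B : Finset (ℕ × ℕ)))
      (by simp [Finset.mem_product, ha, hb'] : ((a, b') : ℕ × ℕ) ∈ (A ×ˢ B : Finset (ℕ × ℕ))) this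
    have := congrArg Prod.fst this
    simp at this
    omega
  · intro hdisj
    rintro ⟨a, b⟩ hab ⟨a', b'⟩ hab' heq
    simp only [Finset.mem_coe, Finset.mem_product] at hab hab'
    simp only at heq
    rcases lt_trichotomy a a' with h | h | h
    · exfalso
      have hdA : a' - a ∈ diffSet A := mem_diffSet.mpr ⟨a', hab'.1, a, hab.1, h, rfl⟩
      have hdB : a' - a ∈ diffSet B := mem_diffSet.mpr ⟨b, hab.2, b', hab'.2, by omega, by omega⟩
      exact Finset.disjoint_left.mp hdisj hdA hdB
    · have : b = b' := by omega
      simp [h, this]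
    · exfalso
      have hdA : a - a' ∈ diffSet A := mem_diffSet.mpr ⟨a, hab.1, a', hab'.1, h, rfl⟩
      have hdB : a - a' ∈ diffSet B := mem_diffSet.mpr ⟨b', hab'.2, b, hab.2, by omega, by omega⟩
      exact Finset.disjoint_left.mp hdisj hdA hdB

/-- A labeling of the vertices of the complete graph `K_n` by pairwise distinct
nonempty finite sets of non-negative integers satisfies the strong condition
`|A_i + A_j| = |A_i| * |A_j|` on every edge iff the difference sets `D_1, …, D_n`
are pairwise disjoint. -/
theorem completeGraph_strong_iff_pairwise_disjoint_diffSets (n : ℕ) (hn : 0 < n)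
    (f : Fin n → Finset ℕ) (hne : ∀ i, (f i).Nonempty) (hinj : Function.Injective f) :
    (∀ i j : Fin n, (⊤ : SimpleGraph (Fin n)).Adj i j →
        (f i + f j).card = (f i).card * (f j).card) ↔
      Pairwise fun i j => Disjoint (diffSet (f i)) (diffSet (f j)) := by
  constructor
  · intro h i j hij
    exact (strong_iff_disjoint (f i) (f j)).mp (h i j (by simpa using hij))
  · intro h i j hij
    exact (strong_iff_disjoint (f i) (f j)).mpr (h (by simpa using hij))
end

section
/- Let f be an integer additive set-indexer of a simple graph G. Then f is a strong IASI of G if and only if for every edge uv of G the difference sets of the set-labels of its end vertices are disjoint, i.e., D_{f(u)} ∩ D_{f(v)} = ∅, where D_A denotes the set of positive differences between elements of A. -/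
open Pointwise

lemma card_add_eq_iff {A B : Finset ℕ} :
    (A + B).card = A.card * B.card ↔ Disjoint (diffSet A) (diffSet B) := by
  rw [← Finset.image_add_product, ← Finset.card_product, Finset.card_image_iff]
  constructor
  · intro hinj
    rw [Finset.disjoint_left]
    intro d hdA hdB
    obtain ⟨a, ha, a', ha', hlt, hd⟩ := mem_diffSet.mp hdA
    obtain ⟨b, hb, b', hb', hlt', hd'⟩ := mem_diffSet.mp hdB
    have : ((a, b') : ℕ × ℕ) = (a', b) := by
      apply hinj (by simp [Finset.mem_coe, ha, hb']) (by simp [ha', hb])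
      simp only; omega
    simp only [Prod.mk.injEq] at this
    omega
  · intro hdisj
    rintro ⟨a, b⟩ hab ⟨a', b'⟩ hab' heq
    simp only [Finset.coe_product, Set.mem_prod, Finset.mem_coe] at hab hab'
    simp only at heq
    rcases lt_trichotomy a a' with h | h | h
    · exfalso
      have hA : a' - a ∈ diffSet A := mem_diffSet.mpr ⟨a', hab'.1, a, hab.1, h, rfl⟩
      have hB : a' - a ∈ diffSet B := mem_diffSet.mpr ⟨b, hab.2, b', hab'.2, by omega, by omega⟩
      exact Finset.disjoint_left.mp hdisj hA hB
    · have : b = b' := by omega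
      simp [h, this]
    · exfalso
      have hA : a - a' ∈ diffSet A := mem_diffSet.mpr ⟨a, hab.1, a', hab'.1, h, rfl⟩
      have hB : a - a' ∈ diffSet B := mem_diffSet.mpr ⟨b', hab'.2, b, hab.2, by omega, by omega⟩
      exact Finset.disjoint_left.mp hdisj hA hB

/-- An IASI `f` of a simple graph `G` is a strong IASI iff for every edge `uv`
the difference sets of the set-labels of its end vertices are disjoint. -/
theorem strongIASI_iff_disjoint_diffSets {V : Type*} (G : SimpleGraph V) (f : V → Finset ℕ)
    (hf : IsIASI G f) :
    IsStrongIASI G f ↔ ∀ ⦃u v : V⦄, G.Adj u v → Disjoint (diffSet (f u)) (diffSet (f v)) := by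
  constructor
  · intro h u v huv
    exact card_add_eq_iff.mp (h.2 huv)
  · intro h
    exact ⟨hf, fun u v huv => card_add_eq_iff.mpr (h huv)⟩
end

section
/- For every positive integer k, every finite bipartite simple graph admits a strongly k-uniform integer additive set-indexer. -/
open Pointwise

private lemma aux_sum_inj (n k a a' b b' : ℕ) (hk : 0 < k) (ha : a < n) (ha' : a' < n)
    (h : (Finset.range k).image (fun i => a + n * (1 + i + k * b)) =
         (Finset.range k).image (fun i => a' + n * (1 + i + k * b'))) :
    a = a' ∧ b = b' := by
  have hn : 0 < n := lt_of_le_of_lt (Nat.zero_le a) ha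
  have h0 : a + n * (1 + 0 + k * b) ∈
      (Finset.range k).image (fun i => a + n * (1 + i + k * b)) :=
    Finset.mem_image_of_mem _ (Finset.mem_range.mpr hk)
  rw [h] at h0
  obtain ⟨i, hi, hieq⟩ := Finset.mem_image.mp h0
  have h0' : a' + n * (1 + 0 + k * b') ∈
      (Finset.range k).image (fun i => a' + n * (1 + i + k * b')) :=
    Finset.mem_image_of_mem _ (Finset.mem_range.mpr hk)
  rw [← h] at h0'
  obtain ⟨j, hj, hjeq⟩ := Finset.mem_image.mp h0'
  have haa : a = a' := by
    have hmod := congrArg (· % n) hieq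
    simp only [Nat.add_mul_mod_self_left] at hmod
    rw [Nat.mod_eq_of_lt ha', Nat.mod_eq_of_lt ha] at hmod
    exact hmod.symm
  subst haa
  refine ⟨rfl, ?_⟩
  have h1 : 1 + i + k * b' = 1 + 0 + k * b :=
    Nat.eq_of_mul_eq_mul_left hn (Nat.add_left_cancel hieq)
  have h2 : 1 + j + k * b = 1 + 0 + k * b' :=
    Nat.eq_of_mul_eq_mul_left hn (Nat.add_left_cancel hjeq)
  have hbb : k * b = k * b' := by omega
  exact Nat.eq_of_mul_eq_mul_left hk hbb

/-- For every positive integer `k`, every finite bipartite simple graph admits a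
strongly `k`-uniform IASI.  (Bipartite is expressed as 2-colorability.) -/
theorem bipartite_admits_stronglyUniformIASI {V : Type*} [Fintype V] (G : SimpleGraph V)
    (hG : G.Colorable 2) (k : ℕ) (hk : 0 < k) :
    ∃ f : V → Finset ℕ, IsStronglyUniformIASI G f k := by
  classical
  obtain ⟨C⟩ := hG
  set n := Fintype.card V with hn
  set ι : V ≃ Fin n := Fintype.equivFin V with hι
  set f : V → Finset ℕ := fun v =>
    if C v = 0 then {((ι v : Fin n) : ℕ)}
    else (Finset.range k).image fun i => n * (1 + i + k * ((ι v : Fin n) : ℕ)) with hf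
  have hnpos : ∀ _v : V, 0 < n := fun v => Fintype.card_pos_iff.mpr ⟨v⟩
  have hlt : ∀ v : V, ((ι v : Fin n) : ℕ) < n := fun v => (ι v).isLt
  have two : ∀ x : Fin 2, x = 0 ∨ x = 1 := by decide
  have hmapinj : ∀ v : V, ∀ b : ℕ, Function.Injective (fun i => n * (1 + i + k * b)) := by
    intro v b i j hij
    have hnp := hnpos v
    have := Nat.eq_of_mul_eq_mul_left hnp hij
    omega
  have hcard0 : ∀ v : V, C v = 0 → (f v).card = 1 := by
    intro v hv; simp [hf, hv]
  have hcard1 : ∀ v : V, ¬ C v = 0 → (f v).card = k := by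
    intro v hv
    simp only [hf, if_neg hv]
    rw [Finset.card_image_of_injective _ (hmapinj v _), Finset.card_range]
  have hsum : ∀ a b : V, C a = 0 → ¬ C b = 0 →
      f a + f b = (Finset.range k).image
        (fun i => ((ι a : Fin n) : ℕ) + n * (1 + i + k * ((ι b : Fin n) : ℕ))) := by
    intro a b hA hB
    have hsingle : ∀ (a : ℕ) (s : Finset ℕ), ({a} : Finset ℕ) + s = s.image (a + ·) := by
      intro a s; ext x; simp [Finset.mem_add, eq_comm]
    simp only [hf, if_pos hA, if_neg hB]
    rw [hsingle, Finset.image_image]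
    rfl
  have hsuminj : ∀ a b : V, Function.Injective
      (fun i => ((ι a : Fin n) : ℕ) + n * (1 + i + k * ((ι b : Fin n) : ℕ))) := by
    intro a b i j hij
    exact hmapinj a _ (Nat.add_left_cancel hij)
  have hsumcard : ∀ a b : V, C a = 0 → ¬ C b = 0 → (f a + f b).card = k := by
    intro a b hA hB
    rw [hsum a b hA hB, Finset.card_image_of_injective _ (hsuminj a b), Finset.card_range]
  have hcolors : ∀ u v : V, G.Adj u v → (C u = 0 ∧ ¬ C v = 0) ∨ (C v = 0 ∧ ¬ C u = 0) := by
    intro u v huv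
    have hne := C.valid huv
    rcases two (C u) with h1 | h1 <;> rcases two (C v) with h2 | h2 <;>
      simp_all
  -- key: equal edge sums force equal endpoint pairs (in the 0/1 normalized order)
  have hkey : ∀ u v u' v' : V, C u = 0 → ¬ C v = 0 → C u' = 0 → ¬ C v' = 0 →
      f u + f v = f u' + f v' → u = u' ∧ v = v' := by
    intro u v u' v' h1 h2 h3 h4 heq
    rw [hsum u v h1 h2, hsum u' v' h3 h4] at heq
    obtain ⟨ha, hb⟩ := aux_sum_inj n k _ _ _ _ hk (hlt u) (hlt u') heq
    constructor
    · exact ι.injective (Fin.val_injective ha)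
    · exact ι.injective (Fin.val_injective hb)
  refine ⟨f, ⟨⟨?_, ?_, ?_⟩, ?_⟩, ?_⟩
  · -- injectivity of f
    intro u v huv
    by_cases h1 : C u = 0 <;> by_cases h2 : C v = 0
    · have : ((ι u : Fin n) : ℕ) = ((ι v : Fin n) : ℕ) := by
        have := huv
        simp only [hf, if_pos h1, if_pos h2, Finset.singleton_inj] at this
        exact this
      exact ι.injective (Fin.val_injective this)
    · exfalso
      have hmem : ((ι u : Fin n) : ℕ) ∈ f v := by
        rw [← huv]; simp [hf, if_pos h1]
      simp only [hf, if_neg h2, Finset.mem_image, Finset.mem_range] at hmem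
      obtain ⟨i, hi, hieq⟩ := hmem
      have : n ≤ n * (1 + i + k * ((ι v : Fin n) : ℕ)) :=
        le_trans (le_of_eq (Nat.mul_one n).symm) (Nat.mul_le_mul_left n (by omega))
      have := hlt u
      omega
    · exfalso
      have hmem : ((ι v : Fin n) : ℕ) ∈ f u := by
        rw [huv]; simp [hf, if_pos h2]
      simp only [hf, if_neg h1, Finset.mem_image, Finset.mem_range] at hmem
      obtain ⟨i, hi, hieq⟩ := hmem
      have : n ≤ n * (1 + i + k * ((ι u : Fin n) : ℕ)) :=
        le_trans (le_of_eq (Nat.mul_one n).symm) (Nat.mul_le_mul_left n (by omega))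
      have := hlt v
      omega
    · have hmem : n * (1 + 0 + k * ((ι u : Fin n) : ℕ)) ∈ f v := by
        rw [← huv]
        simp only [hf, if_neg h1]
        exact Finset.mem_image_of_mem _ (Finset.mem_range.mpr hk)
      simp only [hf, if_neg h2, Finset.mem_image, Finset.mem_range] at hmem
      obtain ⟨i, hi, hieq⟩ := hmem
      have hnp := hnpos u
      have h1' := Nat.eq_of_mul_eq_mul_left hnp hieq
      have hmem' : n * (1 + 0 + k * ((ι v : Fin n) : ℕ)) ∈ f u := by
        rw [huv]
        simp only [hf, if_neg h2]
        exact Finset.mem_image_of_mem _ (Finset.mem_range.mpr hk)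
      simp only [hf, if_neg h1, Finset.mem_image, Finset.mem_range] at hmem'
      obtain ⟨j, hj, hjeq⟩ := hmem'
      have h2' := Nat.eq_of_mul_eq_mul_left hnp hjeq
      have : k * ((ι u : Fin n) : ℕ) = k * ((ι v : Fin n) : ℕ) := by omega
      exact ι.injective (Fin.val_injective (Nat.eq_of_mul_eq_mul_left hk this))
  · -- nonempty
    intro v
    by_cases h : C v = 0
    · simp [hf, h]
    · simp only [hf, if_neg h]
      exact Finset.Nonempty.image ⟨0, Finset.mem_range.mpr hk⟩ _
  · -- edge sum injectivity
    intro u v u' v' huv hu'v' heq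
    rcases hcolors u v huv with ⟨h1, h2⟩ | ⟨h1, h2⟩ <;>
      rcases hcolors u' v' hu'v' with ⟨h3, h4⟩ | ⟨h3, h4⟩
    · obtain ⟨e1, e2⟩ := hkey u v u' v' h1 h2 h3 h4 heq
      rw [e1, e2]
    · obtain ⟨e1, e2⟩ := hkey u v v' u' h1 h2 h3 h4 (by rw [heq, add_comm])
      rw [e1, e2]; exact Sym2.eq_swap
    · obtain ⟨e1, e2⟩ := hkey v u u' v' h1 h2 h3 h4 (by rw [← heq, add_comm])
      rw [e1, e2]; exact Sym2.eq_swap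
    · obtain ⟨e1, e2⟩ := hkey v u v' u' h1 h2 h3 h4 (by rw [add_comm, heq, add_comm])
      rw [e1, e2]
  · -- strong: card of sum = product of cards
    intro u v huv
    rcases hcolors u v huv with ⟨h1, h2⟩ | ⟨h1, h2⟩
    · rw [hsumcard u v h1 h2, hcard0 u h1, hcard1 v h2, one_mul]
    · rw [add_comm, hsumcard v u h1 h2, hcard0 v h1, hcard1 u h2, mul_one]
  · -- uniform k
    intro u v huv
    rcases hcolors u v huv with ⟨h1, h2⟩ | ⟨h1, h2⟩
    · exact hsumcard u v h1 h2
    · rw [add_comm]; exact hsumcard v u h1 h2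
end

section
/- Let p be a prime number and let f be a strongly p-uniform integer additive set-indexer of a simple graph G. Then f is also a weakly p-uniform IASI of G; that is, for every edge uv of G, one end vertex has set-indexing number 1 and the other has set-indexing number p (so |f⁺(uv)| = max(|f(u)|, |f(v)|) = p). -/
open Pointwise

/-- If `p` is prime and `f` is a strongly `p`-uniform IASI of `G`, then `f` is also
a weakly `p`-uniform IASI: on every edge one end vertex has set-indexing number 1 and the
other has set-indexing number `p`, so `|f⁺(uv)| = max(|f(u)|, |f(v)|) = p`. -/
theorem stronglyUniformIASI_prime_is_weaklyUniform {V : Type*} (G : SimpleGraph V)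
    (f : V → Finset ℕ) (p : ℕ) (hp : p.Prime) (hf : IsStronglyUniformIASI G f p) :
    (∀ ⦃u v : V⦄, G.Adj u v →
        ((f u).card = 1 ∧ (f v).card = p) ∨ ((f u).card = p ∧ (f v).card = 1)) ∧
      IsWeaklyUniformIASI G f p := by
  obtain ⟨⟨hIASI, hstrong⟩, huni⟩ := hf
  have key : ∀ ⦃u v : V⦄, G.Adj u v →
      ((f u).card = 1 ∧ (f v).card = p) ∨ ((f u).card = p ∧ (f v).card = 1) := by
    intro u v huv
    have hmul : (f u).card * (f v).card = p := (hstrong huv).symm.trans (huni huv)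
    have hpr : Nat.Prime ((f u).card * (f v).card) := by rw [hmul]; exact hp
    rcases Nat.prime_mul_iff.mp hpr with ⟨_, h2⟩ | ⟨_, h1⟩
    · right
      rw [h2, mul_one] at hmul
      exact ⟨hmul, h2⟩
    · left
      rw [h1, one_mul] at hmul
      exact ⟨h1, hmul⟩
  refine ⟨key, hIASI, fun u v huv => ?_⟩
  have hs := huni huv
  rcases key huv with ⟨h1, h2⟩ | ⟨h1, h2⟩ <;>
    simp [h1, h2, hs, Nat.one_le_iff_ne_zero, hp.one_lt.le, hp.pos]
end

section
/- Let G be a finite bipartite simple graph with at least one edge, and let k be a positive integer. Then G admits a strongly k-uniform integer additive set-indexer that is not a weakly k-uniform IASI (i.e., its weakly and strongly k-uniform IASIs can be chosen distinct) if and only if k is a composite number. -/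
open Pointwise

def myF (M i stp sz : ℕ) : Finset ℕ := (Finset.range sz).image fun j => M ^ i + j * stp

lemma myF_card {stp : ℕ} (hstp : 0 < stp) (M i sz : ℕ) : (myF M i stp sz).card = sz := by
  rw [myF, Finset.card_image_of_injective, Finset.card_range]
  intro a b hab
  simp only at hab
  have : a * stp = b * stp := by omega
  exact Nat.eq_of_mul_eq_mul_right hstp this

lemma myF_mem {sz : ℕ} (hsz : 0 < sz) (M i stp : ℕ) : M ^ i ∈ myF M i stp sz := by
  rw [myF, Finset.mem_image]
  exact ⟨0, by simpa using hsz, by simp⟩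

lemma myF_le {M i stp sz x : ℕ} (hx : x ∈ myF M i stp sz) : M ^ i ≤ x := by
  rw [myF, Finset.mem_image] at hx
  obtain ⟨j, _, rfl⟩ := hx
  omega

lemma myF_add {m n : ℕ} (hm : 0 < m) (hn : 0 < n) (M a b : ℕ) :
    myF M a 1 m + myF M b m n =
      (Finset.range (m * n)).image fun t => (M ^ a + M ^ b) + t := by
  ext x
  simp only [myF, Finset.mem_add, Finset.mem_image, Finset.mem_range]
  constructor
  · rintro ⟨p, ⟨j, hj, rfl⟩, q, ⟨l, hl, rfl⟩, rfl⟩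
    refine ⟨j + l * m, ?_, by ring⟩
    have h2 : l + 1 ≤ n := hl
    calc j + l * m < m + l * m := by omega
      _ = (1 + l) * m := by ring
      _ ≤ n * m := Nat.mul_le_mul_right m (by omega)
      _ = m * n := Nat.mul_comm _ _
  · rintro ⟨t, ht, rfl⟩
    refine ⟨M ^ a + t % m * 1, ⟨t % m, Nat.mod_lt _ hm, rfl⟩,
      M ^ b + (t / m) * m, ⟨t / m, ?_, rfl⟩, ?_⟩
    · rw [Nat.div_lt_iff_lt_mul hm]
      have := Nat.mul_comm m n
      omega
    · have h1 := Nat.mod_add_div t m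
      have h2 := Nat.mul_comm m (t / m)
      omega

lemma interval_base_inj {N c d : ℕ} (hN : 0 < N)
    (h : (Finset.range N).image (fun t => c + t) = (Finset.range N).image (fun t => d + t)) :
    c = d := by
  have hc : c ∈ (Finset.range N).image (fun t => c + t) :=
    Finset.mem_image.2 ⟨0, Finset.mem_range.2 hN, by simp⟩
  have hd : d ∈ (Finset.range N).image (fun t => d + t) :=
    Finset.mem_image.2 ⟨0, Finset.mem_range.2 hN, by simp⟩
  rw [h] at hc
  rw [← h] at hd
  obtain ⟨t, _, ht⟩ := Finset.mem_image.1 hc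
  obtain ⟨s, _, hs⟩ := Finset.mem_image.1 hd
  omega

lemma interval_card (N c : ℕ) :
    ((Finset.range N).image fun t => c + t).card = N := by
  rw [Finset.card_image_of_injective _ (add_right_injective c), Finset.card_range]

lemma nmod0 {d x : ℕ} (h : d ∣ x) : x % d = 0 := by
  obtain ⟨q, rfl⟩ := h; exact Nat.mul_mod_right d q

lemma pow_base_inj_lt {M a b c d : ℕ} (hM : 2 ≤ M) (hab : a < b) (hcd : c < d)
    (h : M ^ a + M ^ b = M ^ c + M ^ d) : a = c ∧ b = d := by
  have key : ∀ a b c d : ℕ, a < b → c < d → M ^ a + M ^ b = M ^ c + M ^ d → ¬ a < c := by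
    intro a b c d hab hcd h hac
    have hpos : 0 < M ^ (a+1) := Nat.pow_pos (by omega)
    have hbmod : M ^ b % M ^ (a+1) = 0 :=
      nmod0 (pow_dvd_pow M (by omega))
    have hcmod : M ^ c % M ^ (a+1) = 0 :=
      nmod0 (pow_dvd_pow M (by omega))
    have hdmod : M ^ d % M ^ (a+1) = 0 :=
      nmod0 (pow_dvd_pow M (by omega))
    have hamod : M ^ a % M ^ (a+1) = M ^ a :=
      Nat.mod_eq_of_lt (Nat.pow_lt_pow_right (by omega) (Nat.lt_succ_self a))
    have h1 : (M ^ a + M ^ b) % M ^ (a+1) = M ^ a := by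
      rw [Nat.add_mod, hbmod, hamod, Nat.add_zero, hamod]
    have h2 : (M ^ c + M ^ d) % M ^ (a+1) = 0 := by
      rw [Nat.add_mod, hcmod, hdmod, Nat.add_zero, Nat.zero_mod]
    rw [h, h2] at h1
    have : 0 < M ^ a := Nat.pow_pos (show 0 < M by omega)
    omega
  have hac : a = c := by
    rcases Nat.lt_trichotomy a c with h' | h' | h'
    · exact absurd h' (key a b c d hab hcd h)
    · exact h'
    · exact absurd h' (key c d a b hcd hab h.symm)
  subst hac
  have : M ^ b = M ^ d := by omega
  exact ⟨rfl, Nat.pow_right_injective hM this⟩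

lemma pow_pair_inj {M a b c d : ℕ} (hM : 2 ≤ M) (hab : a ≠ b) (hcd : c ≠ d)
    (h : M ^ a + M ^ b = M ^ c + M ^ d) : (a = c ∧ b = d) ∨ (a = d ∧ b = c) := by
  rcases Nat.lt_or_ge a b with h1 | h1
  · rcases Nat.lt_or_ge c d with h2 | h2
    · exact Or.inl (pow_base_inj_lt hM h1 h2 h)
    · have h2' : d < c := by omega
      have := pow_base_inj_lt hM h1 h2' (by omega)
      exact Or.inr ⟨this.1, this.2⟩
  · have h1' : b < a := by omega
    rcases Nat.lt_or_ge c d with h2 | h2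
    · have := pow_base_inj_lt hM h1' h2 (by omega)
      exact Or.inr ⟨this.2, this.1⟩
    · have h2' : d < c := by omega
      have := pow_base_inj_lt hM h1' h2' (by omega)
      exact Or.inl ⟨this.2, this.1⟩

/-- A finite bipartite simple graph with at least one edge admits a strongly
`k`-uniform IASI which is not a weakly `k`-uniform IASI iff `k` is composite. -/
theorem bipartite_strong_not_weak_iff_composite {V : Type*} [Fintype V] (G : SimpleGraph V)
    (hG : G.Colorable 2) (he : G.edgeSet.Nonempty) (k : ℕ) (hk : 0 < k) :
    (∃ f : V → Finset ℕ, IsStronglyUniformIASI G f k ∧ ¬ IsWeaklyUniformIASI G f k) ↔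
      ∃ m n : ℕ, 1 < m ∧ 1 < n ∧ k = m * n := by
  constructor
  · rintro ⟨f, ⟨⟨hIASI, hmul⟩, hunif⟩, hnw⟩
    have key : ∃ u v, G.Adj u v ∧ (f u + f v).card ≠ max (f u).card (f v).card := by
      by_contra hc
      push_neg at hc
      exact hnw ⟨hIASI, fun u v h => ⟨hc u v h, hunif h⟩⟩
    obtain ⟨u, v, huv, hne⟩ := key
    have h1 := hmul huv
    have h2 := hunif huv
    have hu1 : 0 < (f u).card := (hIASI.2.1 u).card_pos
    have hv1 : 0 < (f v).card := (hIASI.2.1 v).card_pos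
    refine ⟨(f u).card, (f v).card, ?_, ?_, by omega⟩
    · by_contra h
      have h' : (f u).card = 1 := by omega
      apply hne
      rw [h1, h', Nat.one_mul, Nat.max_eq_right hv1]
    · by_contra h
      have h' : (f v).card = 1 := by omega
      apply hne
      rw [h1, h', Nat.mul_one, Nat.max_eq_left hu1]
  · rintro ⟨m, n, hm, hn, rfl⟩
    obtain ⟨C⟩ := hG
    set M : ℕ := m * n + 1 with hMdef
    have hM2 : 2 ≤ M := by nlinarith
    have hm0 : 0 < m := by omega
    have hn0 : 0 < n := by omega
    have hmn : 0 < m * n := Nat.mul_pos hm0 hn0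
    set ι : V → ℕ := fun v => ((Fintype.equivFin V) v : ℕ) + 1 with hιdef
    have hιinj : Function.Injective ι := by
      intro a b hab
      simp only [hιdef] at hab
      exact (Fintype.equivFin V).injective (Fin.ext (by omega))
    set f : V → Finset ℕ := fun v => if C v = 0 then myF M (ι v) 1 m else myF M (ι v) m n
      with hfdef
    have hmem : ∀ v, M ^ ι v ∈ f v := by
      intro v; simp only [hfdef]
      split
      · exact myF_mem hm0 _ _ _
      · exact myF_mem hn0 _ _ _
    have hle : ∀ v, ∀ x ∈ f v, M ^ ι v ≤ x := by
      intro v x hx; simp only [hfdef] at hx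
      split at hx <;> exact myF_le hx
    have hcard : ∀ v, (f v).card = if C v = 0 then m else n := by
      intro v; simp only [hfdef]
      split
      · exact myF_card one_pos _ _ _
      · exact myF_card hm0 _ _ _
    have hfinj : Function.Injective f := by
      intro a b hab
      have h1 : M ^ ι b ≤ M ^ ι a := hle b _ (hab ▸ hmem a)
      have h2 : M ^ ι a ≤ M ^ ι b := hle a _ (hab.symm ▸ hmem b)
      exact hιinj (Nat.pow_right_injective hM2 (Nat.le_antisymm h2 h1))
    have hcol : ∀ ⦃u v⦄, G.Adj u v → C u ≠ C v := fun u v h => C.valid h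
    have fin2 : ∀ x : Fin 2, x = 0 ∨ x = 1 := by decide
    have hsum : ∀ ⦃u v : V⦄, C u = 0 → C v ≠ 0 →
        f u + f v = (Finset.range (m * n)).image fun t => (M ^ ι u + M ^ ι v) + t := by
      intro u v h0 h1
      simp only [hfdef, if_pos h0, if_neg h1]
      exact myF_add hm0 hn0 M (ι u) (ι v)
    have hιne : ∀ ⦃u v⦄, G.Adj u v → ι u ≠ ι v :=
      fun u v h heq => (G.ne_of_adj h) (hιinj heq)
    have othercol : ∀ ⦃u v : V⦄, G.Adj u v → C u ≠ 0 → C v = 0 := by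
      intro u v huv hu
      rcases fin2 (C v) with h | h
      · exact h
      · exact absurd ((fin2 (C u)).resolve_left hu |>.trans h.symm) (hcol huv)
    have othercol' : ∀ ⦃u v : V⦄, G.Adj u v → C u = 0 → C v ≠ 0 :=
      fun u v huv hu h => hcol huv (hu.trans h.symm)
    have key : ∀ u v u' v' : V, G.Adj u v → G.Adj u' v' → C u = 0 → C u' = 0 →
        f u + f v = f u' + f v' → u = u' ∧ v = v' := by
      intro u v u' v' huv hu'v' hcu hcu' heq
      have hcv : C v ≠ 0 := othercol' huv hcu
      have hcv' : C v' ≠ 0 := othercol' hu'v' hcu'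
      rw [hsum hcu hcv, hsum hcu' hcv'] at heq
      have hbase := interval_base_inj hmn heq
      rcases pow_pair_inj hM2 (hιne huv) (hιne hu'v') hbase with ⟨ha, hb⟩ | ⟨ha, hb⟩
      · exact ⟨hιinj ha, hιinj hb⟩
      · exfalso
        have huv' : u = v' := hιinj ha
        rw [huv'] at hcu
        exact hcv' hcu
    have hIASI : IsIASI G f := by
      refine ⟨hfinj, fun v => ⟨M ^ ι v, hmem v⟩, ?_⟩
      intro u v u' v' huv hu'v' heq
      rcases fin2 (C u) with h0 | h1
      · rcases fin2 (C u') with h0' | h1'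
        · obtain ⟨rfl, rfl⟩ := key u v u' v' huv hu'v' h0 h0' heq
          rfl
        · have h0' : C v' = 0 := othercol hu'v' (by rw [h1']; decide)
          obtain ⟨rfl, rfl⟩ := key u v v' u' huv hu'v'.symm h0 h0'
            (heq.trans (add_comm (f u') (f v')))
          exact Sym2.eq_swap.symm
      · have h0 : C v = 0 := othercol huv (by rw [h1]; decide)
        rcases fin2 (C u') with h0' | h1'
        · obtain ⟨rfl, rfl⟩ := key v u u' v' huv.symm hu'v' h0 h0'
            ((add_comm (f v) (f u)).trans heq)
          exact Sym2.eq_swap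
        · have h0' : C v' = 0 := othercol hu'v' (by rw [h1']; decide)
          obtain ⟨rfl, rfl⟩ := key v u v' u' huv.symm hu'v'.symm h0 h0'
            (((add_comm (f v) (f u)).trans heq).trans (add_comm (f u') (f v')))
          rfl
    have hsumcard : ∀ ⦃u v : V⦄, G.Adj u v → (f u + f v).card = m * n := by
      intro u v huv
      rcases fin2 (C u) with h0 | h1
      · rw [hsum h0 (othercol' huv h0), interval_card]
      · have h0 : C v = 0 := othercol huv (by rw [h1]; decide)
        rw [add_comm (f u) (f v), hsum h0 (othercol' huv.symm h0), interval_card]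
    refine ⟨f, ⟨⟨hIASI, ?_⟩, fun u v huv => hsumcard huv⟩, ?_⟩
    · intro u v huv
      rw [hsumcard huv, hcard u, hcard v]
      rcases fin2 (C u) with h0 | h1
      · rw [if_pos h0, if_neg (othercol' huv h0)]
      · have hu0 : C u ≠ 0 := by rw [h1]; decide
        rw [if_neg hu0, if_pos (othercol huv hu0)]
        exact Nat.mul_comm m n
    · rintro ⟨-, hw⟩
      obtain ⟨u, v, huv⟩ : ∃ u v, G.Adj u v := by
        obtain ⟨e, heE⟩ := he
        induction e using Sym2.ind with
        | _ x y => exact ⟨x, y, heE⟩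
      have hmaxne : ∀ {x y : ℕ}, 1 < x → 1 < y → x * y ≠ max x y := by
        intro x y hx hy heq
        rcases Nat.le_total x y with h | h
        · rw [Nat.max_eq_right h] at heq; nlinarith
        · rw [Nat.max_eq_left h] at heq; nlinarith
      have hw' := (hw huv).1
      rw [hsumcard huv, hcard u, hcard v] at hw'
      rcases fin2 (C u) with h0 | h1
      · rw [if_pos h0, if_neg (othercol' huv h0)] at hw'
        exact hmaxne hm hn hw'
      · have hu0 : C u ≠ 0 := by rw [h1]; decide
        rw [if_neg hu0, if_pos (othercol huv hu0)] at hw'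
        rw [Nat.mul_comm] at hw'
        exact hmaxne hn hm hw'
end

section
/- Let n ≥ 3 and let f be a strongly k-uniform integer additive set-indexer of the complete graph K_n. Then f is a (k, l)-completely uniform IASI where l = √k; that is, every vertex of K_n has set-indexing number l with l² = k (in particular k is a perfect square). -/
open Pointwise

/-- For `n ≥ 3`, a strongly `k`-uniform IASI of the complete graph `K_n` is a
`(k, l)`-completely uniform IASI with `l = √k`: every vertex has set-indexing number `l`
and `l² = k` (in particular `k` is a perfect square). -/
theorem completeGraph_stronglyUniform_is_completelyUniform (n k : ℕ) (hn : 3 ≤ n)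
    (f : Fin n → Finset ℕ) (hf : IsStronglyUniformIASI (⊤ : SimpleGraph (Fin n)) f k) :
    ∃ l : ℕ, l * l = k ∧ ∀ v : Fin n, (f v).card = l := by
  obtain ⟨⟨⟨_, hne, _⟩, hstrong⟩, hunif⟩ := hf
  have key : ∀ u v : Fin n, u ≠ v → (f u).card * (f v).card = k := fun u v h => by
    have hadj : (⊤ : SimpleGraph (Fin n)).Adj u v := h
    rw [← hstrong hadj]; exact hunif hadj
  have hpos : ∀ v : Fin n, 0 < (f v).card := fun v => Finset.card_pos.2 (hne v)
  set a : Fin n := ⟨0, by omega⟩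
  set b : Fin n := ⟨1, by omega⟩
  set c : Fin n := ⟨2, by omega⟩
  have hab : a ≠ b := by simp [a, b, Fin.ext_iff]
  have hac : a ≠ c := by simp [a, c, Fin.ext_iff]
  have hbc : b ≠ c := by simp [b, c, Fin.ext_iff]
  refine ⟨(f a).card, ?_, ?_⟩
  · have h1 := key a b hab
    have h2 := key a c hac
    have h3 := key b c hbc
    have hb := hpos b
    have hc := hpos c
    nlinarith
  · intro v
    by_cases hva : v = a
    · rw [hva]
    by_cases hvb : v = b
    · have h1 := key a c hac
      have h2 := key b c hbc
      have := hpos c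
      rw [hvb]; nlinarith
    · have h1 := key a b hab
      have h2 := key v b hvb
      have := hpos b
      nlinarith
end

section
/- Let k be a positive integer that is not a perfect square. Then a finite simple graph G without isolated vertices admits a strongly k-uniform integer additive set-indexer if and only if G is bipartite (equivalently, every connected component of G is bipartite). -/
open Pointwise

/-- For a positive integer `k` that is not a perfect square, a finite simple graph
`G` without isolated vertices admits a strongly `k`-uniform IASI iff `G` is bipartite. -/
theorem stronglyUniform_nonSquare_iff_bipartite {V : Type*} [Fintype V] (G : SimpleGraph V)
    (k : ℕ) (hk : 0 < k) (hsq : ¬ ∃ l : ℕ, l * l = k) (hiso : ∀ v : V, ∃ u : V, G.Adj v u) :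
    (∃ f : V → Finset ℕ, IsStronglyUniformIASI G f k) ↔ G.Colorable 2 := by

  classical
  constructor
  · rintro ⟨f, ⟨⟨hinj, hne, hedge⟩, hstrong⟩, hcard⟩
    refine ⟨SimpleGraph.Coloring.mk
      (fun v => if (f v).card * (f v).card < k then 0 else 1) ?_⟩
    intro u v huv h
    have h1 : (f u).card * (f v).card = k := by
      rw [← hstrong huv]; exact hcard huv
    have hcu : 0 < (f u).card := Finset.card_pos.2 (hne u)
    have hcv : 0 < (f v).card := Finset.card_pos.2 (hne v)
    by_cases h2 : (f u).card * (f u).card < k <;>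
      by_cases h3 : (f v).card * (f v).card < k
    · nlinarith
    · simp [h2, h3] at h
    · simp [h2, h3] at h
    · push_neg at h2 h3
      have h2' : (f u).card * (f v).card ≤ (f u).card * (f u).card := by rw [h1]; exact h2
      have h3' : (f v).card * (f u).card ≤ (f v).card * (f v).card := by
        rw [mul_comm, h1]; exact h3
      have hvu : (f v).card ≤ (f u).card := Nat.le_of_mul_le_mul_left h2' hcu
      have huv' : (f u).card ≤ (f v).card := Nat.le_of_mul_le_mul_left h3' hcv
      have : (f u).card = (f v).card := le_antisymm huv' hvu
      exact hsq ⟨(f u).card, by rw [← h1, this]⟩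
  · rintro ⟨C⟩
    cases isEmpty_or_nonempty V with
    | inl hV =>
      refine ⟨fun v => ∅, ⟨⟨?_, ?_, ?_⟩, ?_⟩, ?_⟩ <;> intro v <;> exact isEmptyElim v
    | inr hV =>
      set n := Fintype.card V with hn_def
      have hn : 0 < n := Fintype.card_pos
      set ι : V → ℕ := fun v => (Fintype.equivFin V v : ℕ) with hι_def
      have hι : Function.Injective ι := fun a b h =>
        (Fintype.equivFin V).injective (Fin.val_injective h)
      have hιlt : ∀ v, ι v < n := fun v => (Fintype.equivFin V v).isLt
      have hk2 : 2 ≤ k := by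
        rcases k with _ | _ | k
        · omega
        · exact absurd ⟨1, rfl⟩ hsq
        · omega
      have hfin : ∀ a : Fin 2, a = 0 ∨ a = 1 := by decide
      set B : ℕ → Finset ℕ :=
        fun c => (Finset.range k).image (fun j => n * (j + 1) + n * k * c) with hB_def
      set f : V → Finset ℕ := fun v => if C v = 0 then {ι v} else B (ι v) with hf_def
      -- cardinality of B
      have hBinj : ∀ c : ℕ, Function.Injective (fun j => n * (j + 1) + n * k * c) := by
        intro c a b h
        simp only at h
        have h1 : n * (a + 1) = n * (b + 1) := Nat.add_right_cancel h
        have := Nat.eq_of_mul_eq_mul_left hn h1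
        omega
      have hBcard : ∀ c, (B c).card = k := by
        intro c
        rw [hB_def]
        rw [Finset.card_image_of_injective _ (hBinj c), Finset.card_range]
      -- decoding elements of B
      have hdecB : ∀ c, ∀ x ∈ B c, (x / n - 1) / k = c := by
        intro c x hx
        rw [hB_def] at hx
        obtain ⟨j, hj, rfl⟩ := Finset.mem_image.1 hx
        have hjk : j < k := Finset.mem_range.1 hj
        have hx' : n * (j + 1) + n * k * c = n * ((j + 1) + k * c) := by ring
        rw [hx', Nat.mul_div_cancel_left _ hn]
        have h1 : (j + 1 + k * c - 1) = j + k * c := by omega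
        rw [h1, Nat.add_mul_div_left _ _ (by omega : 0 < k),
          Nat.div_eq_of_lt hjk, zero_add]
      -- decoding elements of oriented edge sums
      have hdec : ∀ u v, C u = 0 → C v ≠ 0 → ∀ x ∈ f u + f v,
          x % n = ι u ∧ (x / n - 1) / k = ι v := by
        intro u v hu hv x hx
        rw [hf_def] at hx
        simp only [if_pos hu, if_neg hv] at hx
        rw [Finset.mem_add] at hx
        obtain ⟨a, ha, b, hb, rfl⟩ := hx
        rw [Finset.mem_singleton] at ha
        subst ha
        rw [hB_def] at hb
        obtain ⟨j, hj, rfl⟩ := Finset.mem_image.1 hb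
        have hjk : j < k := Finset.mem_range.1 hj
        have hx' : ι u + (n * (j + 1) + n * k * ι v) = ι u + n * ((j + 1) + k * ι v) := by
          ring
        constructor
        · rw [hx', Nat.add_mul_mod_self_left, Nat.mod_eq_of_lt (hιlt u)]
        · rw [hx', Nat.add_mul_div_left _ _ hn, Nat.div_eq_of_lt (hιlt u), zero_add]
          have h1 : (j + 1 + k * ι v - 1) = j + k * ι v := by omega
          rw [h1, Nat.add_mul_div_left _ _ (by omega : 0 < k),
            Nat.div_eq_of_lt hjk, zero_add]
      have hfne : ∀ v, (f v).Nonempty := by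
        intro v
        rw [hf_def]
        by_cases h : C v = 0
        · simp [h]
        · simp only [if_neg h]
          exact Finset.Nonempty.image ⟨0, Finset.mem_range.2 (by omega)⟩ _
      -- key injectivity of edge sums for oriented edges
      have hmain : ∀ u v u' v', C u = 0 → C u' = 0 → C v ≠ 0 → C v' ≠ 0 →
          f u + f v = f u' + f v' → u = u' ∧ v = v' := by
        intro u v u' v' hu hu' hv hv' heq
        obtain ⟨x, hx⟩ := Finset.Nonempty.add (hfne u) (hfne v)
        have d1 := hdec u v hu hv x hx
        have d2 := hdec u' v' hu' hv' x (heq ▸ hx)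
        exact ⟨hι (d1.1.symm.trans d2.1), hι (d1.2.symm.trans d2.2)⟩
      -- injectivity of f
      have hfinj : Function.Injective f := by
        intro a b h
        by_cases ha : C a = 0 <;> by_cases hb : C b = 0
        · rw [hf_def] at h
          simp only [if_pos ha, if_pos hb] at h
          exact hι (Finset.singleton_injective h)
        · exfalso
          have := congrArg Finset.card h
          rw [hf_def] at this
          simp only [if_pos ha, if_neg hb, Finset.card_singleton, hBcard] at this
          omega
        · exfalso
          have := congrArg Finset.card h
          rw [hf_def] at this
          simp only [if_neg ha, if_pos hb, Finset.card_singleton, hBcard] at this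
          omega
        · have hmem : n * (0 + 1) + n * k * ι a ∈ B (ι a) := by
            rw [hB_def]
            exact Finset.mem_image.2 ⟨0, Finset.mem_range.2 (by omega), rfl⟩
          have hmem' : n * (0 + 1) + n * k * ι a ∈ B (ι b) := by
            have hfa : f a = B (ι a) := by rw [hf_def]; simp [ha]
            have hfb : f b = B (ι b) := by rw [hf_def]; simp [hb]
            rw [← hfb, ← h, hfa]; exact hmem
          have e1 := hdecB (ι a) _ hmem
          have e2 := hdecB (ι b) _ hmem'
          exact hι (e1.symm.trans e2)
      -- colors on edges
      have hcol : ∀ u v, G.Adj u v → C u = 0 → C v ≠ 0 := by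
        intro u v huv hu h
        exact C.valid huv (by rw [hu, h])
      have hcol' : ∀ u v, G.Adj u v → C u ≠ 0 → C v = 0 := by
        intro u v huv hu
        rcases hfin (C v) with h | h
        · exact h
        · rcases hfin (C u) with h' | h'
          · exact absurd h' hu
          · exact absurd (h'.trans h.symm) (C.valid huv)
      -- cardinality of oriented edge sums
      have hsumcard : ∀ u v, C u = 0 → C v ≠ 0 → (f u + f v).card = k := by
        intro u v hu hv
        rw [hf_def]
        simp only [if_pos hu, if_neg hv]
        rw [Finset.card_singleton_add, hBcard]
      refine ⟨f, ⟨⟨hfinj, hfne, ?_⟩, ?_⟩, ?_⟩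
      · -- edge injectivity
        intro u v u' v' huv hu'v' heq
        by_cases hu : C u = 0 <;> by_cases hu' : C u' = 0
        · obtain ⟨rfl, rfl⟩ := hmain u v u' v' hu hu' (hcol u v huv hu)
            (hcol u' v' hu'v' hu') heq
          rfl
        · have hv' : C v' = 0 := hcol' u' v' hu'v' hu'
          have hu'1 : C u' ≠ 0 := hu'
          have heq' : f u + f v = f v' + f u' := by rw [heq, add_comm]
          obtain ⟨h1, h2⟩ := hmain u v v' u' hu hv' (hcol u v huv hu) hu'1 heq'
          rw [h1, h2, Sym2.eq_swap]
        · have hv : C v = 0 := hcol' u v huv hu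
          have heq' : f v + f u = f u' + f v' := by rw [add_comm, heq]
          obtain ⟨h1, h2⟩ := hmain v u u' v' hv hu' hu (hcol u' v' hu'v' hu') heq'
          rw [← Sym2.eq_swap, h1, h2]
        · have hv : C v = 0 := hcol' u v huv hu
          have hv' : C v' = 0 := hcol' u' v' hu'v' hu'
          have heq' : f v + f u = f v' + f u' := by rw [add_comm, heq, add_comm]
          obtain ⟨h1, h2⟩ := hmain v u v' u' hv hv' hu hu' heq'
          rw [← Sym2.eq_swap, h1, h2, Sym2.eq_swap]
      · -- strong condition
        intro u v huv
        by_cases hu : C u = 0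
        · have hv := hcol u v huv hu
          rw [hsumcard u v hu hv]
          rw [hf_def]
          simp only [if_pos hu, if_neg hv, Finset.card_singleton, hBcard, one_mul]
        · have hv := hcol' u v huv hu
          have hv1 : C v = 0 := hv
          have hu1 : C u ≠ 0 := hu
          rw [add_comm, hsumcard v u hv1 hu1]
          rw [hf_def]
          simp only [if_neg hu1, if_pos hv1, Finset.card_singleton, hBcard, mul_one]
      · -- uniform condition
        intro u v huv
        by_cases hu : C u = 0
        · exact hsumcard u v hu (hcol u v huv hu)
        · rw [add_comm]; exact hsumcard v u (hcol' u v huv hu) hu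
end

section
/- If a finite simple graph G contains an odd cycle (in particular, if some connected component of G is a clique on at least 3 vertices) and G admits a strongly k-uniform integer additive set-indexer, then k is a perfect square. -/
open Pointwise

/-- If a finite simple graph `G` contains an odd cycle and admits a strongly
`k`-uniform IASI, then `k` is a perfect square. -/
theorem oddCycle_stronglyUniform_perfectSquare {V : Type*} [Fintype V] (G : SimpleGraph V)
    (k : ℕ) (hodd : ∃ (v : V) (c : G.Walk v v), c.IsCycle ∧ Odd c.length)
    (hf : ∃ f : V → Finset ℕ, IsStronglyUniformIASI G f k) :
    ∃ l : ℕ, l * l = k := by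
  obtain ⟨f, ⟨⟨hIASI, hstrong⟩, huniform⟩⟩ := hf
  obtain ⟨v, c, _, hoddlen⟩ := hodd
  have hpos : ∀ u : V, 0 < (f u).card := fun u => Finset.card_pos.mpr (hIASI.2.1 u)
  have hedge : ∀ ⦃u w : V⦄, G.Adj u w → (f u).card * (f w).card = k := fun u w h =>
    (hstrong h).symm.trans (huniform h)
  have key : ∀ {u w : V} (p : G.Walk u w),
      (Even p.length → (f u).card = (f w).card) ∧
      (Odd p.length → (f u).card * (f w).card = k) := by
    intro u w p
    induction p with
    | nil =>
      refine ⟨fun _ => rfl, fun h => absurd h (by simp)⟩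
    | @cons a x b h p ih =>
      constructor
      · intro hev
        have hodd' : Odd p.length := by
          have : Even (p.length + 1) := by simpa using hev
          exact Nat.not_even_iff_odd.mp (Nat.even_add_one.mp this)
        have h1 := ih.2 hodd'
        have h2 := hedge h
        have h3 : (f a).card * (f x).card = (f b).card * (f x).card := by
          rw [h2, mul_comm]; exact h1.symm
        exact Nat.eq_of_mul_eq_mul_right (hpos x) h3
      · intro hod
        have hev' : Even p.length := by
          have : Odd (p.length + 1) := by simpa using hod
          exact Nat.not_odd_iff_even.mp (Nat.odd_add_one.mp this)
        have h1 := ih.1 hev'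
        have h2 := hedge h
        rw [← h1]; exact h2
  exact ⟨(f v).card, (key c).2 hoddlen⟩
end

section
/- Let G be a finite connected non-bipartite simple graph and let f be a strongly k-uniform integer additive set-indexer of G. Then k is a perfect square and f is (k, l)-completely uniform with l = √k; that is, every vertex of G has set-indexing number l where l² = k. -/
open Pointwise

/-- If `G` is a finite connected non-bipartite simple graph and `f` is a strongly
`k`-uniform IASI of `G`, then `k` is a perfect square and `f` is `(k, l)`-completely uniform
with `l = √k`: every vertex has set-indexing number `l` where `l² = k`. -/
theorem connected_nonBipartite_stronglyUniform {V : Type*} [Fintype V] (G : SimpleGraph V)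
    (hconn : G.Connected) (hnb : ¬ G.Colorable 2) (f : V → Finset ℕ) (k : ℕ)
    (hf : IsStronglyUniformIASI G f k) :
    ∃ l : ℕ, l * l = k ∧ ∀ v : V, (f v).card = l := by
  obtain ⟨⟨⟨hinj, hne, _⟩, hstrong⟩, hk⟩ := hf
  have hedge : ∀ ⦃u v : V⦄, G.Adj u v → (f u).card * (f v).card = k :=
    fun u v h => (hstrong h).symm.trans (hk h)
  have hpos : ∀ v, 0 < (f v).card := fun v => Finset.card_pos.2 (hne v)
  -- G has an edge, otherwise it's 2-colorable
  have hE : ∃ u v : V, G.Adj u v := by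
    by_contra h
    push_neg at h
    exact hnb ⟨⟨fun _ => 0, fun {a b} hab => absurd hab (h a b)⟩⟩
  obtain ⟨u1, v1, huv1⟩ := hE
  by_cases hconst : ∀ ⦃u v : V⦄, G.Adj u v → (f u).card = (f v).card
  · have key : ∀ {x y : V} (p : G.Walk x y), (f x).card = (f y).card := by
      intro x y p
      induction p with
      | nil => rfl
      | cons h p ih => exact (hconst h).trans ih
    refine ⟨(f u1).card, ?_, fun v => ?_⟩
    · have := hedge huv1
      rwa [← key (hconn u1 v1).some] at this
    · exact (key (hconn v u1).some)
  · exfalso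
    push_neg at hconst
    obtain ⟨u0, v0, huv0, hab⟩ := hconst
    set a := (f u0).card with ha
    set b := (f v0).card with hb
    have hkab : k = a * b := (hedge huv0).symm
    have step : ∀ ⦃x y : V⦄, G.Adj x y → ((f x).card = a ∨ (f x).card = b) →
        ((f y).card = a ∨ (f y).card = b) := by
      intro x y h hx
      have hxy : (f x).card * (f y).card = a * b := (hedge h).trans hkab
      rcases hx with hx | hx
      · right
        rw [hx] at hxy
        exact Nat.eq_of_mul_eq_mul_left (hpos u0) hxy
      · left
        rw [hx, mul_comm a b] at hxy
        exact Nat.eq_of_mul_eq_mul_left (hpos v0) hxy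
    have key : ∀ {x y : V} (p : G.Walk x y), ((f x).card = a ∨ (f x).card = b) →
        ((f y).card = a ∨ (f y).card = b) := by
      intro x y p
      induction p with
      | nil => exact id
      | cons h p ih => exact fun hx => ih (step h hx)
    have hall : ∀ v : V, (f v).card = a ∨ (f v).card = b := fun v =>
      key (hconn u0 v).some (Or.inl rfl)
    refine hnb ⟨⟨fun v => if (f v).card = a then 0 else 1, ?_⟩⟩
    intro x y hxy
    change (if (f x).card = a then (0 : Fin 2) else 1) ≠ (if (f y).card = a then (0 : Fin 2) else 1)
    have hxyk : (f x).card * (f y).card = a * b := (hedge hxy).trans hkab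
    by_cases hx : (f x).card = a
    · have hy : (f y).card = b := by
        rw [hx] at hxyk
        exact Nat.eq_of_mul_eq_mul_left (hpos u0) hxyk
      have hyne : (f y).card ≠ a := by rw [hy]; exact fun h => hab (hb ▸ h.symm ▸ rfl)
      simp [hx, hyne]
    · have hxb : (f x).card = b := (hall x).resolve_left hx
      have hy : (f y).card = a := by
        rw [hxb, mul_comm a b] at hxyk
        exact Nat.eq_of_mul_eq_mul_left (hpos v0) hxyk
      simp [hx, hy]
end

section
/- Let G be a finite connected non-bipartite simple graph and let k be a positive integer. Then G admits a strongly k-uniform integer additive set-indexer if and only if k is a perfect square. -/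
open Pointwise

lemma digit_lemma {B p q a b a' b' : ℕ} (hB : 1 < B) (hpq : p < q)
    (ha : a < B) (ha' : a' < B)
    (h : a * B ^ p + b * B ^ q = a' * B ^ p + b' * B ^ q) : a = a' ∧ b = b' := by
  have hq : 0 < B ^ q := Nat.pow_pos (by omega)
  have hp : 0 < B ^ p := Nat.pow_pos (by omega)
  have key : ∀ c : ℕ, c < B → c * B ^ p < B ^ q := by
    intro c hc
    calc c * B ^ p < B * B ^ p := (Nat.mul_lt_mul_right hp).mpr hc
    _ = B ^ (p + 1) := by ring
    _ ≤ B ^ q := Nat.pow_le_pow_right (by omega) (by omega)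
  have h1 : (a * B ^ p + b * B ^ q) / B ^ q = b := by
    rw [Nat.add_mul_div_right _ _ hq, Nat.div_eq_of_lt (key a ha)]; omega
  have h2 : (a' * B ^ p + b' * B ^ q) / B ^ q = b' := by
    rw [Nat.add_mul_div_right _ _ hq, Nat.div_eq_of_lt (key a' ha')]; omega
  have hb : b = b' := by rw [← h1, ← h2, h]
  subst hb
  have : a * B ^ p = a' * B ^ p := by omega
  exact ⟨Nat.eq_of_mul_eq_mul_right hp this, rfl⟩

lemma pow_pair_lemma {B a b c d : ℕ} (hB : 2 ≤ B) (hab : a < b) (hcd : c < d)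
    (h : B ^ a + B ^ b = B ^ c + B ^ d) : a = c ∧ b = d := by
  have hmono : ∀ x y : ℕ, x < y → B ^ x < B ^ y := fun x y hxy =>
    Nat.pow_lt_pow_right (by omega) hxy
  have key : ∀ x y z w : ℕ, x < y → z < w → y < w → B ^ x + B ^ y < B ^ z + B ^ w := by
    intro x y z w hxy hzw hyw
    have : B ^ x + B ^ y < 2 * B ^ y := by have := hmono x y hxy; omega
    have h2 : 2 * B ^ y ≤ B * B ^ y := Nat.mul_le_mul_right _ hB
    have h3 : B * B ^ y = B ^ (y + 1) := by ring
    have h4 : B ^ (y + 1) ≤ B ^ w := Nat.pow_le_pow_right (by omega) (by omega)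
    omega
  have hbd : b = d := by
    rcases lt_trichotomy b d with h1 | h1 | h1
    · exact absurd h (Nat.ne_of_lt (key a b c d hab hcd h1))
    · exact h1
    · exact absurd h.symm (Nat.ne_of_lt (key c d a b hcd hab h1))
  subst hbd
  have : B ^ a = B ^ c := by omega
  exact ⟨Nat.pow_right_injective hB this, rfl⟩

lemma pow_pair_lemma' {B a b c d : ℕ} (hB : 2 ≤ B) (hab : a ≠ b) (hcd : c ≠ d)
    (h : B ^ a + B ^ b = B ^ c + B ^ d) : (a = c ∧ b = d) ∨ (a = d ∧ b = c) := by
  rcases Nat.lt_or_ge a b with h1 | h1 <;> rcases Nat.lt_or_ge c d with h2 | h2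
  · exact Or.inl (pow_pair_lemma hB h1 h2 h)
  · have h2' : d < c := by omega
    have := pow_pair_lemma hB h1 h2' (by omega)
    exact Or.inr ⟨this.1, this.2⟩
  · have h1' : b < a := by omega
    have := pow_pair_lemma hB h1' h2 (by omega)
    exact Or.inr ⟨this.2, this.1⟩
  · have h1' : b < a := by omega
    have h2' : d < c := by omega
    have := pow_pair_lemma hB h1' h2' (by omega)
    exact Or.inl ⟨this.2, this.1⟩

lemma construction {V : Type*} [Fintype V] (G : SimpleGraph V) (l : ℕ) (hl : 0 < l) :
    ∃ f : V → Finset ℕ, IsStronglyUniformIASI G f (l * l) := by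
  classical
  set n := Fintype.card V with hn
  set e := Fintype.equivFin V with he
  set B := l + 2 with hB
  have hB2 : 2 ≤ B := by omega
  have idx_lt : ∀ v : V, (e v : ℕ) < n := fun v => (e v).2
  set f : V → Finset ℕ := fun v =>
    (Finset.range l).image (fun j => B ^ (e v : ℕ) + j * B ^ (n + (e v : ℕ))) with hf
  have hmem : ∀ v a, a ∈ f v ↔ ∃ j, j < l ∧ a = B ^ (e v : ℕ) + j * B ^ (n + (e v : ℕ)) := by
    intro v a
    simp only [hf, Finset.mem_image, Finset.mem_range]
    constructor
    · rintro ⟨j, hj, rfl⟩; exact ⟨j, hj, rfl⟩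
    · rintro ⟨j, hj, rfl⟩; exact ⟨j, hj, rfl⟩
  have hcard : ∀ v, (f v).card = l := by
    intro v
    rw [hf]
    rw [Finset.card_image_of_injOn, Finset.card_range]
    intro x _ y _ hxy
    simp only at hxy
    have hpos : 0 < B ^ (n + (e v : ℕ)) := Nat.pow_pos (by omega)
    have : x * B ^ (n + (e v : ℕ)) = y * B ^ (n + (e v : ℕ)) := by omega
    exact Nat.eq_of_mul_eq_mul_right hpos this
  have h0 : ∀ v : V, B ^ (e v : ℕ) ∈ f v := fun v => (hmem v _).mpr ⟨0, hl, by ring⟩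
  have hne : ∀ u v : V, u ≠ v → (e u : ℕ) ≠ (e v : ℕ) := by
    intro u v huv h
    exact huv (e.injective (Fin.ext h))
  -- injectivity of f
  have hinj : Function.Injective f := by
    intro u v huv
    by_contra hne'
    have hiu := hne u v hne'
    have h1 := h0 u
    rw [huv] at h1
    obtain ⟨j, hj, hj2⟩ := (hmem v _).mp h1
    have hlt : B ^ (e u : ℕ) < B ^ (n + (e v : ℕ)) :=
      Nat.pow_lt_pow_right (by omega) (by have := idx_lt u; omega)
    rcases Nat.eq_zero_or_pos j with rfl | hjpos
    · simp at hj2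
      exact hiu (Nat.pow_right_injective hB2 hj2)
    · have : B ^ (n + (e v : ℕ)) ≤ j * B ^ (n + (e v : ℕ)) := Nat.le_mul_of_pos_left _ hjpos
      omega
  -- cardinality of sumsets
  have hsumcard : ∀ u v : V, u ≠ v → (f u + f v).card = l * l := by
    intro u v huv
    have hiu := hne u v huv
    have key : ((f u : Set ℕ) ×ˢ (f v : Set ℕ)).InjOn fun p => p.1 + p.2 := ?_
    · rw [Finset.card_add_iff.mpr key, hcard, hcard]
    rintro ⟨a, b⟩ hab ⟨a', b'⟩ hab' habeq
    simp only [Set.mem_prod, Finset.mem_coe] at hab hab'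
    obtain ⟨j1, hj1, rfl⟩ := (hmem u a).mp hab.1
    obtain ⟨j2, hj2, rfl⟩ := (hmem v b).mp hab.2
    obtain ⟨j1', hj1', rfl⟩ := (hmem u a').mp hab'.1
    obtain ⟨j2', hj2', rfl⟩ := (hmem v b').mp hab'.2
    simp only at habeq
    have heq : j1 * B ^ (n + (e u : ℕ)) + j2 * B ^ (n + (e v : ℕ))
        = j1' * B ^ (n + (e u : ℕ)) + j2' * B ^ (n + (e v : ℕ)) := by omega
    have : j1 = j1' ∧ j2 = j2' := by
      rcases Nat.lt_or_ge (n + (e u : ℕ)) (n + (e v : ℕ)) with hlt | hge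
      · exact digit_lemma (by omega) hlt (by omega) (by omega) heq
      · have hlt : n + (e v : ℕ) < n + (e u : ℕ) := by omega
        have := digit_lemma (B := B) (a := j2) (b := j1) (a' := j2') (b' := j1')
          (by omega) hlt (by omega) (by omega) (by omega)
        exact ⟨this.2, this.1⟩
    simp [Prod.ext_iff, this.1, this.2]
  -- min of sumset
  have hlb : ∀ u v : V, ∀ y ∈ f u + f v, B ^ (e u : ℕ) + B ^ (e v : ℕ) ≤ y := by
    intro u v y hy
    obtain ⟨a, ha, b, hb, rfl⟩ := Finset.mem_add.mp hy
    obtain ⟨j1, _, rfl⟩ := (hmem u a).mp ha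
    obtain ⟨j2, _, rfl⟩ := (hmem v b).mp hb
    omega
  refine ⟨f, ⟨⟨hinj, fun v => ?_, ?_⟩, fun u v huv => ?_⟩, fun u v huv => ?_⟩
  · exact ⟨_, h0 v⟩
  · intro u v u' v' huv hu'v' heq
    have m1 : B ^ (e u' : ℕ) + B ^ (e v' : ℕ) ∈ f u + f v := by
      rw [heq]; exact Finset.add_mem_add (h0 u') (h0 v')
    have m2 : B ^ (e u : ℕ) + B ^ (e v : ℕ) ∈ f u' + f v' := by
      rw [← heq]; exact Finset.add_mem_add (h0 u) (h0 v)
    have : B ^ (e u : ℕ) + B ^ (e v : ℕ) = B ^ (e u' : ℕ) + B ^ (e v' : ℕ) :=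
      le_antisymm (hlb u v _ m1) (hlb u' v' _ m2)
    rcases pow_pair_lemma' hB2 (hne u v huv.ne) (hne u' v' hu'v'.ne) this with ⟨ha, hb⟩ | ⟨ha, hb⟩
    · rw [e.injective (Fin.ext ha), e.injective (Fin.ext hb)]
    · rw [e.injective (Fin.ext ha), e.injective (Fin.ext hb), Sym2.eq_swap]
  · rw [hsumcard u v huv.ne, hcard, hcard]
  · exact hsumcard u v huv.ne

/-- A finite connected non-bipartite simple graph admits a strongly `k`-uniform
IASI iff `k` is a perfect square. -/
theorem connected_nonBipartite_stronglyUniform_iff_square {V : Type*} [Fintype V]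
    (G : SimpleGraph V) (hconn : G.Connected) (hnb : ¬ G.Colorable 2) (k : ℕ) (hk : 0 < k) :
    (∃ f : V → Finset ℕ, IsStronglyUniformIASI G f k) ↔ ∃ l : ℕ, l * l = k := by
  constructor
  · rintro ⟨f, ⟨⟨hiasi, hstrong⟩, hunif⟩⟩
    by_contra hs
    push_neg at hs
    apply hnb
    set s := Nat.sqrt k with hsdef
    refine ⟨SimpleGraph.Coloring.mk
      (fun v => if (f v).card ≤ s then (0 : Fin 2) else 1) ?_⟩
    intro u v huv
    have h1 := hstrong huv
    have h2 := hunif huv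
    have hk' : (f u).card * (f v).card = k := by omega
    have hs1 : s * s ≤ k := Nat.sqrt_le k
    have hs2 : k < (s + 1) * (s + 1) := Nat.lt_succ_sqrt k
    rcases le_or_gt (f u).card s with h | h <;> rcases le_or_gt (f v).card s with h' | h'
    · exfalso
      have hle : (f u).card * (f v).card ≤ s * s := Nat.mul_le_mul h h'
      exact hs s (by omega)
    · rw [if_pos h, if_neg (not_le.mpr h')]
      decide
    · rw [if_neg (not_le.mpr h), if_pos h']
      decide
    · exfalso
      have hle : (s + 1) * (s + 1) ≤ (f u).card * (f v).card :=
        Nat.mul_le_mul h h'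
      omega
  · rintro ⟨l, rfl⟩
    have hl : 0 < l := by
      rcases Nat.eq_zero_or_pos l with rfl | h
      · simp at hk
      · exact h
    exact construction G l hl
end

section
/- Let G be a finite connected simple graph with at least one edge and let k be a positive integer. Then G admits a strongly k-uniform integer additive set-indexer if and only if G is bipartite or k is a perfect square; moreover, in the non-bipartite case every such IASI is (k, l)-completely uniform with k = l². -/
open Pointwise

open Pointwise

-- digit lemma, ordered
lemma digit_ord {M P Q a b a' b' : ℕ} (hM : 1 ≤ M) (hlt : P < Q)
    (ha : a < M) (ha' : a' < M)
    (h : a * M ^ P + b * M ^ Q = a' * M ^ P + b' * M ^ Q) : a = a' ∧ b = b' := by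
  obtain ⟨d, rfl⟩ : ∃ d, Q = P + (d + 1) := ⟨Q - P - 1, by omega⟩
  rw [pow_add] at h
  have hMP : 0 < M ^ P := by positivity
  have h2 : M ^ P * (a + M ^ (d+1) * b) = M ^ P * (a' + M ^ (d+1) * b') := by
    ring_nf; ring_nf at h; linarith
  have h3 := Nat.eq_of_mul_eq_mul_left hMP h2
  have hMd : M ≤ M ^ (d+1) := by
    calc M = M ^ 1 := (pow_one M).symm
    _ ≤ M ^ (d+1) := Nat.pow_le_pow_right hM (by omega)
  have haa : a = a' := by
    have := congrArg (· % M ^ (d+1)) h3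
    simpa [Nat.add_mul_mod_self_left, Nat.mod_eq_of_lt (by omega : a < M ^ (d+1)),
      Nat.mod_eq_of_lt (by omega : a' < M ^ (d+1))] using this
  subst haa
  have : M ^ (d+1) * b = M ^ (d+1) * b' := by omega
  exact ⟨rfl, Nat.eq_of_mul_eq_mul_left (by positivity) this⟩

lemma digit_lemma_s16 {M P Q a b a' b' : ℕ} (hM : 1 ≤ M) (hPQ : P ≠ Q)
    (ha : a < M) (hb : b < M) (ha' : a' < M) (hb' : b' < M)
    (h : a * M ^ P + b * M ^ Q = a' * M ^ P + b' * M ^ Q) : a = a' ∧ b = b' := by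
  rcases hPQ.lt_or_gt with hlt | hlt
  · exact digit_ord hM hlt ha ha' h
  · have := digit_ord (b:=a) (b':=a') hM hlt hb hb' (by linarith)
    exact ⟨this.2, this.1⟩

lemma pow_pair_ord {M P Q P' Q' : ℕ} (hM : 2 ≤ M) (h : P < Q) (h' : P' < Q')
    (heq : M ^ P + M ^ Q = M ^ P' + M ^ Q') : P = P' ∧ Q = Q' := by
  have chain : ∀ {A B A' B' : ℕ}, A < B → A' < B' → B < B' →
      M ^ A + M ^ B < M ^ A' + M ^ B' := by
    intro A B A' B' hAB hAB' hBB'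
    calc M ^ A + M ^ B < M ^ B + M ^ B := by
          have := Nat.pow_lt_pow_right (by omega : 1 < M) hAB; omega
      _ = 2 * M ^ B := by ring
      _ ≤ M * M ^ B := Nat.mul_le_mul_right _ (by omega)
      _ = M ^ (B + 1) := by ring
      _ ≤ M ^ B' := Nat.pow_le_pow_right (by omega) (by omega)
      _ ≤ M ^ A' + M ^ B' := Nat.le_add_left _ _
  have hQ : Q = Q' := by
    rcases lt_trichotomy Q Q' with hh | hh | hh
    · exact absurd heq (Nat.ne_of_lt (chain h h' hh))
    · exact hh
    · exact absurd heq.symm (Nat.ne_of_lt (chain h' h hh))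
  subst hQ
  have hP : M ^ P = M ^ P' := by omega
  exact ⟨Nat.pow_right_injective hM hP, rfl⟩

lemma pow_pair {M P Q P' Q' : ℕ} (hM : 2 ≤ M) (h : P ≠ Q) (h' : P' ≠ Q')
    (heq : M ^ P + M ^ Q = M ^ P' + M ^ Q') :
    (P = P' ∧ Q = Q') ∨ (P = Q' ∧ Q = P') := by
  rcases h.lt_or_gt with h1 | h1 <;> rcases h'.lt_or_gt with h2 | h2
  · exact Or.inl (pow_pair_ord hM h1 h2 heq)
  · have := pow_pair_ord hM h1 h2 (by linarith)
    exact Or.inr ⟨this.1, this.2⟩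
  · have := pow_pair_ord hM h1 h2 (by linarith)
    exact Or.inr ⟨this.2, this.1⟩
  · have := pow_pair_ord hM h1 h2 (by linarith)
    exact Or.inl ⟨this.2, this.1⟩
lemma construct {V : Type*} [Fintype V] (G : SimpleGraph V) (k : ℕ)
    (t : V → ℕ) (h1 : ∀ v, 1 ≤ t v) (h2 : ∀ v, t v ≤ k)
    (h3 : ∀ ⦃u v⦄, G.Adj u v → t u * t v = k) :
    ∃ f : V → Finset ℕ, IsStronglyUniformIASI G f k := by
  classical
  set M : ℕ := k + 2 with hMdef
  have hM2 : 2 ≤ M := by omega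
  set e : V → ℕ := fun v => ((Fintype.equivFin V) v : ℕ) with hedef
  have he : Function.Injective e := fun u v h =>
    (Fintype.equivFin V).injective (Fin.val_injective h)
  set f : V → Finset ℕ :=
    fun v => (Finset.range (t v)).image fun j => (j + 1) * M ^ (e v + 1) with hfdef
  have hmem : ∀ v x, x ∈ f v ↔ ∃ j, j < t v ∧ x = (j + 1) * M ^ (e v + 1) := by
    intro v x
    simp only [hfdef, Finset.mem_image, Finset.mem_range]
    constructor
    · rintro ⟨j, hj, rfl⟩; exact ⟨j, hj, rfl⟩
    · rintro ⟨j, hj, rfl⟩; exact ⟨j, hj, rfl⟩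
  have hinj : ∀ v : V, Function.Injective fun j : ℕ => (j + 1) * M ^ (e v + 1) := by
    intro v a b h
    have hpos : 0 < M ^ (e v + 1) := by positivity
    have := Nat.eq_of_mul_eq_mul_right hpos h
    omega
  have hcard : ∀ v, (f v).card = t v := by
    intro v
    rw [hfdef]
    simp [Finset.card_image_of_injective _ (hinj v)]
  have hne : ∀ v, (f v).Nonempty := by
    intro v
    rw [hfdef]
    exact Finset.Nonempty.image ⟨0, Finset.mem_range.2 (h1 v)⟩ _
  have hsum : ∀ u v : V, f u + f v =
      ((Finset.range (t u)) ×ˢ (Finset.range (t v))).image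
        (fun p => (p.1 + 1) * M ^ (e u + 1) + (p.2 + 1) * M ^ (e v + 1)) := by
    intro u v
    ext x
    simp only [Finset.mem_add, hmem, Finset.mem_image, Finset.mem_product, Finset.mem_range]
    constructor
    · rintro ⟨y, ⟨a, ha, rfl⟩, z, ⟨b, hb, rfl⟩, rfl⟩
      exact ⟨(a, b), ⟨ha, hb⟩, rfl⟩
    · rintro ⟨⟨a, b⟩, ⟨ha, hb⟩, rfl⟩
      exact ⟨_, ⟨a, ha, rfl⟩, _, ⟨b, hb, rfl⟩, rfl⟩
  have hsumcard : ∀ u v : V, u ≠ v → (f u + f v).card = t u * t v := by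
    intro u v huv
    rw [hsum u v, Finset.card_image_of_injOn, Finset.card_product,
      Finset.card_range, Finset.card_range]
    rintro ⟨a, b⟩ hab ⟨a', b'⟩ hab' hEq
    simp only [Finset.mem_coe, Finset.mem_product, Finset.mem_range] at hab hab'
    have hPQ : e u + 1 ≠ e v + 1 := fun h => huv (he (by omega))
    have hk1 := h2 u; have hk2 := h2 v
    have := digit_lemma_s16 (M := M) (by omega) hPQ
      (by omega : a + 1 < M) (by omega : b + 1 < M)
      (by omega : a' + 1 < M) (by omega : b' + 1 < M) hEq
    simp only [Prod.mk.injEq]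
    omega
  have hpowmem : ∀ u v : V, M ^ (e u + 1) + M ^ (e v + 1) ∈ f u + f v := by
    intro u v
    exact Finset.add_mem_add ((hmem u _).2 ⟨0, h1 u, by ring⟩)
      ((hmem v _).2 ⟨0, h1 v, by ring⟩)
  have hlow : ∀ (u v : V) (x : ℕ), x ∈ f u + f v →
      M ^ (e u + 1) + M ^ (e v + 1) ≤ x := by
    intro u v x hx
    rw [hsum u v] at hx
    simp only [Finset.mem_image, Finset.mem_product, Finset.mem_range] at hx
    obtain ⟨⟨a, b⟩, _, rfl⟩ := hx
    dsimp only
    have p1 : 0 < M ^ (e u + 1) := by positivity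
    have p2 : 0 < M ^ (e v + 1) := by positivity
    have := Nat.le_mul_of_pos_left (M ^ (e u + 1)) (show 0 < a + 1 by omega)
    have := Nat.le_mul_of_pos_left (M ^ (e v + 1)) (show 0 < b + 1 by omega)
    omega
  refine ⟨f, ⟨⟨⟨?_, hne, ?_⟩, ?_⟩, ?_⟩⟩
  · -- injectivity of f
    intro u v h
    have m1 : M ^ (e u + 1) ∈ f u := (hmem u _).2 ⟨0, h1 u, by ring⟩
    have m2 : M ^ (e v + 1) ∈ f v := (hmem v _).2 ⟨0, h1 v, by ring⟩
    rw [h] at m1; rw [← h] at m2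
    obtain ⟨j, _, hj⟩ := (hmem v _).1 m1
    obtain ⟨j', _, hj'⟩ := (hmem u _).1 m2
    have p1 : 0 < M ^ (e u + 1) := by positivity
    have p2 : 0 < M ^ (e v + 1) := by positivity
    have l1 : M ^ (e v + 1) ≤ M ^ (e u + 1) := by
      rw [hj]; exact Nat.le_mul_of_pos_left _ (by omega)
    have l2 : M ^ (e u + 1) ≤ M ^ (e v + 1) := by
      rw [hj']; exact Nat.le_mul_of_pos_left _ (by omega)
    have : e u + 1 = e v + 1 :=
      Nat.pow_right_injective hM2 (le_antisymm l2 l1)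
    exact he (by omega)
  · -- edge injectivity
    intro u v u' v' huv hu'v' hEq
    have e1 := hlow u' v' _ (hEq ▸ hpowmem u v)
    have e2 := hlow u v _ (hEq.symm ▸ hpowmem u' v')
    have hPQ : e u + 1 ≠ e v + 1 := fun h => huv.ne (he (by omega))
    have hPQ' : e u' + 1 ≠ e v' + 1 := fun h => hu'v'.ne (he (by omega))
    have heq2 : M ^ (e u + 1) + M ^ (e v + 1) = M ^ (e u' + 1) + M ^ (e v' + 1) :=
      le_antisymm e2 e1
    rcases pow_pair hM2 hPQ hPQ' heq2 with ⟨hA, hB⟩ | ⟨hA, hB⟩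
    · have : u = u' := he (by omega)
      have : v = v' := he (by omega)
      simp_all [Sym2.eq_iff]
    · have : u = v' := he (by omega)
      have : v = u' := he (by omega)
      simp_all [Sym2.eq_iff]
  · intro u v huv
    rw [hsumcard u v huv.ne, hcard, hcard]
  · intro u v huv
    rw [hsumcard u v huv.ne, h3 huv]

lemma color_or_edge {V : Type*} (G : SimpleGraph V) (f : V → Finset ℕ) (k : ℕ)
    (hf : IsStronglyUniformIASI G f k) :
    (∃ u v, G.Adj u v ∧ (f u).card = (f v).card) ∨ G.Colorable 2 := by
  classical
  by_cases hE : ∃ u v, G.Adj u v ∧ (f u).card = (f v).card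
  · exact Or.inl hE
  push_neg at hE
  right
  refine ⟨SimpleGraph.Coloring.mk
    (fun v => if (f v).card * (f v).card < k then 0 else 1) ?_⟩
  intro u v huv hcontra
  have hmul : (f u).card * (f v).card = k := by
    rw [← hf.1.2 huv]; exact hf.2 huv
  have hneq := hE u v huv
  have hu1 : 1 ≤ (f u).card := Finset.card_pos.2 (hf.1.1.2.1 u)
  have hv1 : 1 ≤ (f v).card := Finset.card_pos.2 (hf.1.1.2.1 v)
  rcases hneq.lt_or_gt with h | h
  · have c1 : (f u).card * (f u).card < k := by nlinarith
    have c2 : ¬ (f v).card * (f v).card < k := by nlinarith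
    simp [c1, c2] at hcontra
  · have c1 : ¬ (f u).card * (f u).card < k := by nlinarith
    have c2 : (f v).card * (f v).card < k := by nlinarith
    simp [c1, c2] at hcontra

/-- A finite connected simple graph `G` with at least one edge admits a strongly
`k`-uniform IASI iff `G` is bipartite or `k` is a perfect square; moreover, if `G` is
non-bipartite, every such IASI is `(k, l)`-completely uniform with `k = l²`. -/
theorem connected_stronglyUniform_iff_bipartite_or_square {V : Type*} [Fintype V]
    (G : SimpleGraph V) (hconn : G.Connected) (he : G.edgeSet.Nonempty) (k : ℕ) (hk : 0 < k) :
    ((∃ f : V → Finset ℕ, IsStronglyUniformIASI G f k) ↔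
        G.Colorable 2 ∨ ∃ l : ℕ, l * l = k) ∧
      (¬ G.Colorable 2 → ∀ f : V → Finset ℕ, IsStronglyUniformIASI G f k →
        ∃ l : ℕ, l * l = k ∧ ∀ v : V, (f v).card = l) := by
  classical
  have moreover : ¬ G.Colorable 2 → ∀ f : V → Finset ℕ, IsStronglyUniformIASI G f k →
      ∃ l : ℕ, l * l = k ∧ ∀ v : V, (f v).card = l := by
    intro hnb f hf
    rcases color_or_edge G f k hf with ⟨u0, v0, hadj, hcards⟩ | hc
    · have hl0 : 1 ≤ (f u0).card := Finset.card_pos.2 (hf.1.1.2.1 u0)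
      have hmul0 : (f u0).card * (f v0).card = k := by
        rw [← hf.1.2 hadj]; exact hf.2 hadj
      rw [← hcards] at hmul0
      set l := (f u0).card with hldef
      have hkl : l * l = k := hmul0
      have step : ∀ {x y : V}, G.Adj x y → (f x).card = l → (f y).card = l := by
        intro x y hxy hx
        have hmul : (f x).card * (f y).card = k := by
          rw [← hf.1.2 hxy]; exact hf.2 hxy
        rw [hx, ← hkl] at hmul
        exact Nat.eq_of_mul_eq_mul_left (by omega) hmul
      have key : ∀ {x y : V} (p : G.Walk x y), (f x).card = l → (f y).card = l := by
        intro x y p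
        induction p with
        | nil => exact id
        | cons h _ ih => exact fun hx => ih (step h hx)
      refine ⟨l, hkl, fun v => ?_⟩
      obtain ⟨p⟩ := hconn.preconnected u0 v
      exact key p rfl
    · exact absurd hc hnb
  refine ⟨⟨?_, ?_⟩, moreover⟩
  · rintro ⟨f, hf⟩
    by_cases hb : G.Colorable 2
    · exact Or.inl hb
    · obtain ⟨l, hl, _⟩ := moreover hb f hf
      exact Or.inr ⟨l, hl⟩
  · rintro (hcol | ⟨l, hl⟩)
    · obtain ⟨C⟩ := hcol
      refine construct G k (fun v => if C v = 0 then 1 else k) ?_ ?_ ?_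
      · intro v; split <;> omega
      · intro v; split <;> omega
      · intro u v huv
        have hne := C.valid huv
        have two : ∀ x : Fin 2, x = 0 ∨ x = 1 := by decide
        rcases two (C u) with h | h <;> rcases two (C v) with h' | h' <;>
          simp [h, h'] at hne ⊢ <;> omega
    · have hl1 : 1 ≤ l := by nlinarith
      exact construct G k (fun _ => l) (fun _ => hl1) (fun _ => by nlinarith)
        (fun u v _ => hl)
end
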